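/- arXiv:1811.06800 — 6 statements merged into one kernel-verified Lean document; each statement's English description precedes it below -/
import Mathlib

section
/- Let E be a real or complex Banach space, h₀ > 0, and let g : ℝ → E be the sum of a power series centered at 0 with radius of convergence strictly greater than h₀. Then for every j ≥ 0 there exists a constant C > 0 such that for all h ∈ [0, h₀], ‖∫_0^1 P_j(c) g(ch) dc‖ ≤ C h^j. -/
/-- The shifted and scaled Legendre polynomial on `[0,1]`, via Rodrigues' formula:
`P_j(x) = (√(2j+1)/j!) (d/dx)^j [(x² - x)^j]`. -/
noncomputable def legendreP (j : ℕ) : ℝ → ℝ :=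
  fun x => (Real.sqrt (2 * (j : ℝ) + 1) / (Nat.factorial j : ℝ)) *
    iteratedDeriv j (fun y : ℝ => (y ^ 2 - y) ^ j) x

open Polynomial intervalIntegral

/-- Iterated derivative of a polynomial evaluation function. -/
lemma iteratedDeriv_polyeval (k : ℕ) (p : ℝ[X]) :
    iteratedDeriv k (fun y : ℝ => p.eval y) = fun y => (derivative^[k] p).eval y := by
  induction k generalizing p with
  | zero => simp
  | succ k ih =>
    rw [iteratedDeriv_succ',
      show deriv (fun y : ℝ => p.eval y) = fun y => (derivative p).eval y from
        funext fun y => Polynomial.deriv p,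
      ih (derivative p)]
    funext y
    rw [Function.iterate_succ_apply]

/-- Boundary vanishing: low-order iterated derivatives of `(X²-X)^j` vanish at 0 and 1. -/
lemma eval_iterate_derivative_boundary (j k : ℕ) (hk : k < j) {x : ℝ} (hx : x = 0 ∨ x = 1) :
    (derivative^[k] ((X ^ 2 - X : ℝ[X]) ^ j)).eval x = 0 := by
  obtain ⟨s, hs⟩ := Polynomial.pow_sub_dvd_iterate_derivative_pow (X ^ 2 - X : ℝ[X]) j k
  rw [hs, eval_mul, eval_pow]
  have hxe : (X ^ 2 - X : ℝ[X]).eval x = 0 := by rcases hx with h | h <;> simp [h]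
  rw [hxe, zero_pow (by omega), zero_mul]

/-- Lemma 2.1: if `g : ℝ → E` is the sum of a power series centered at `0` with radius of
convergence `> h₀`, then for every `j` there is `C > 0` with
`‖∫_0^1 P_j(c) g(ch) dc‖ ≤ C h^j` for all `h ∈ [0, h₀]`. -/
theorem integral_legendreP_smul_isBigO
    {E : Type*} [NormedAddCommGroup E] [NormedSpace ℝ E] [CompleteSpace E]
    (h₀ : ℝ) (hh₀ : 0 < h₀) (g : ℝ → E) (p : FormalMultilinearSeries ℝ ℝ E) (r : ENNReal)
    (hr : ENNReal.ofReal h₀ < r) (hg : HasFPowerSeriesOnBall g p 0 r) (j : ℕ) :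
    ∃ C > 0, ∀ h ∈ Set.Icc (0:ℝ) h₀,
      ‖∫ c in (0:ℝ)..1, legendreP j c • g (c * h)‖ ≤ C * h ^ j := by
  set s : Set ℝ := Metric.eball (0 : ℝ) r with hs_def
  have hIcc_sub : Set.Icc (0:ℝ) h₀ ⊆ s := by
    intro x hx
    have : edist x 0 < r := by
      rw [edist_dist, Real.dist_eq, sub_zero, abs_of_nonneg hx.1]
      exact lt_of_le_of_lt (ENNReal.ofReal_le_ofReal hx.2) hr
    exact this
  have hG : ∀ k, AnalyticOnNhd ℝ (iteratedDeriv k g) s := by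
    intro k
    induction k with
    | zero => simpa using hg.analyticOnNhd
    | succ k ih => rw [iteratedDeriv_succ]; exact ih.deriv
  have hmem : ∀ {h : ℝ}, h ∈ Set.Icc (0:ℝ) h₀ → ∀ {c : ℝ}, c ∈ Set.Icc (0:ℝ) 1 →
      c * h ∈ Set.Icc (0:ℝ) h₀ := by
    intro h hh c hc
    refine ⟨mul_nonneg hc.1 hh.1, ?_⟩
    calc c * h ≤ 1 * h := by nlinarith [hc.2, hh.1]
      _ = h := one_mul h
      _ ≤ h₀ := hh.2
  set Q : ℝ[X] := (X ^ 2 - X : ℝ[X]) ^ j with hQ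
  have hcont : ∀ (k m : ℕ) (h : ℝ), h ∈ Set.Icc (0:ℝ) h₀ →
      ContinuousOn (fun c : ℝ => (derivative^[m] Q).eval c • (iteratedDeriv k g) (c * h))
        (Set.Icc (0:ℝ) 1) := by
    intro k m h hh
    apply ContinuousOn.smul (Polynomial.continuous _).continuousOn
    apply ContinuousOn.comp ((hG k).continuousOn) (by fun_prop)
    intro c hc
    exact hIcc_sub (hmem hh hc)
  -- key: j-fold integration by parts
  have key : ∀ h ∈ Set.Icc (0:ℝ) h₀, ∀ k ≤ j,
      (∫ c in (0:ℝ)..1, (derivative^[j] Q).eval c • g (c * h)) =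
        (-h) ^ k • ∫ c in (0:ℝ)..1,
          (derivative^[j - k] Q).eval c • (iteratedDeriv k g) (c * h) := by
    intro h hh k hk
    induction k with
    | zero => simp
    | succ k ih =>
      have hkj : k < j := lt_of_lt_of_le (Nat.lt_succ_self k) hk
      rw [ih (le_of_lt hkj)]
      have hjk : j - k = (j - (k + 1)) + 1 := by omega
      set m := j - (k + 1) with hm
      have hderiv : ∀ c ∈ Set.uIcc (0:ℝ) 1,
          HasDerivAt (fun c : ℝ => (derivative^[m] Q).eval c • (iteratedDeriv k g) (c * h))
            ((derivative^[m] Q).eval c • (h • (iteratedDeriv (k+1) g) (c * h))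
              + (derivative^[j-k] Q).eval c • (iteratedDeriv k g) (c * h)) c := by
        intro c hc
        rw [Set.uIcc_of_le (zero_le_one)] at hc
        have h1 : HasDerivAt (fun c : ℝ => (derivative^[m] Q).eval c)
            ((derivative^[j-k] Q).eval c) c := by
          rw [hjk, Function.iterate_succ_apply']
          exact Polynomial.hasDerivAt (derivative^[m] Q) c
        have h2 : HasDerivAt (fun c : ℝ => (iteratedDeriv k g) (c * h))
            (h • (iteratedDeriv (k+1) g) (c * h)) c := by
          have hmem' : c * h ∈ s := hIcc_sub (hmem hh hc)
          have hd : HasDerivAt (iteratedDeriv k g) ((iteratedDeriv (k+1) g) (c * h)) (c * h) := by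
            have := ((hG k) (c*h) hmem').differentiableAt.hasDerivAt
            rwa [← iteratedDeriv_succ] at this
          exact HasDerivAt.scomp c hd (hasDerivAt_mul_const h)
        exact h1.smul h2
      have hint1 : IntervalIntegrable
          (fun c : ℝ => (derivative^[j-k] Q).eval c • (iteratedDeriv k g) (c * h))
          MeasureTheory.volume 0 1 :=
        (hcont k (j-k) h hh).intervalIntegrable_of_Icc zero_le_one
      have hint2 : IntervalIntegrable
          (fun c : ℝ => (derivative^[m] Q).eval c • (h • (iteratedDeriv (k+1) g) (c * h)))
          MeasureTheory.volume 0 1 := by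
        apply ContinuousOn.intervalIntegrable_of_Icc zero_le_one
        apply ContinuousOn.smul (Polynomial.continuous _).continuousOn
        apply ContinuousOn.const_smul
        apply ContinuousOn.comp ((hG (k+1)).continuousOn) (by fun_prop)
        intro c hc
        exact hIcc_sub (hmem hh hc)
      have hFTC := intervalIntegral.integral_eq_sub_of_hasDerivAt hderiv (hint2.add hint1)
      rw [intervalIntegral.integral_add hint2 hint1] at hFTC
      have hb0 : (derivative^[m] Q).eval (0:ℝ) = 0 :=
        eval_iterate_derivative_boundary j m (by omega) (Or.inl rfl)
      have hb1 : (derivative^[m] Q).eval (1:ℝ) = 0 :=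
        eval_iterate_derivative_boundary j m (by omega) (Or.inr rfl)
      rw [hb0, hb1, zero_smul, zero_smul, sub_zero] at hFTC
      have hstep : (∫ c in (0:ℝ)..1, (derivative^[j - k] Q).eval c • (iteratedDeriv k g) (c * h)) =
          (-h) • ∫ c in (0:ℝ)..1,
            (derivative^[m] Q).eval c • (iteratedDeriv (k+1) g) (c * h) := by
        have h3 : (∫ c in (0:ℝ)..1, (derivative^[j - k] Q).eval c • (iteratedDeriv k g) (c * h))
            = -(∫ c in (0:ℝ)..1,
                (derivative^[m] Q).eval c • (h • (iteratedDeriv (k+1) g) (c * h))) :=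
          eq_neg_of_add_eq_zero_right hFTC
        rw [h3]
        have h4 : (fun c : ℝ => (derivative^[m] Q).eval c • (h • (iteratedDeriv (k+1) g) (c * h)))
            = fun c : ℝ => h • ((derivative^[m] Q).eval c • (iteratedDeriv (k+1) g) (c * h)) := by
          funext c; rw [smul_comm]
        rw [h4, intervalIntegral.integral_smul, neg_smul, ← neg_smul]
      rw [hstep, smul_smul, ← pow_succ]
  -- bounds
  obtain ⟨M₁, hM₁⟩ := isCompact_Icc.exists_bound_of_continuousOn
    (f := fun c : ℝ => Q.eval c) (Polynomial.continuous Q).continuousOn (s := Set.Icc (0:ℝ) 1)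
  obtain ⟨M₂, hM₂⟩ := isCompact_Icc.exists_bound_of_continuousOn
    (f := iteratedDeriv j g) (((hG j).continuousOn).mono hIcc_sub) (s := Set.Icc (0:ℝ) h₀)
  have hM₁0 : 0 ≤ M₁ := le_trans (norm_nonneg _) (hM₁ 0 ⟨le_refl 0, zero_le_one⟩)
  have hM₂0 : 0 ≤ M₂ := le_trans (norm_nonneg _) (hM₂ 0 ⟨le_refl 0, le_of_lt hh₀⟩)
  set K : ℝ := Real.sqrt (2 * (j : ℝ) + 1) / (Nat.factorial j : ℝ) with hK
  refine ⟨|K| * (M₁ * M₂) + 1, by positivity, ?_⟩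
  intro h hh
  have hrw : (fun c : ℝ => legendreP j c • g (c * h))
      = fun c : ℝ => K • ((derivative^[j] Q).eval c • g (c * h)) := by
    funext c
    rw [smul_smul]
    congr 1
    unfold legendreP
    congr 1
    have : (fun y : ℝ => (y ^ 2 - y) ^ j) = fun y : ℝ => Q.eval y := by
      funext y; simp [hQ]
    rw [this, iteratedDeriv_polyeval]
  rw [hrw, intervalIntegral.integral_smul, key h hh j le_rfl, Nat.sub_self]
  simp only [Function.iterate_zero, id_eq]
  rw [norm_smul, norm_smul, norm_pow]
  have hnorm : ‖-h‖ = h := by rw [norm_neg, Real.norm_eq_abs, abs_of_nonneg hh.1]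
  rw [hnorm]
  have hI : ‖∫ c in (0:ℝ)..1, Q.eval c • (iteratedDeriv j g) (c * h)‖ ≤ M₁ * M₂ * |1 - 0| := by
    apply intervalIntegral.norm_integral_le_of_norm_le_const
    intro c hc
    rw [Set.uIoc_of_le zero_le_one] at hc
    have hc' : c ∈ Set.Icc (0:ℝ) 1 := ⟨le_of_lt hc.1, hc.2⟩
    rw [norm_smul]
    exact mul_le_mul (hM₁ c hc') (hM₂ _ (hmem hh hc')) (norm_nonneg _) hM₁0
  rw [show |(1:ℝ) - 0| = 1 by norm_num, mul_one] at hI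
  calc ‖K‖ * (h ^ j * ‖∫ c in (0:ℝ)..1, Q.eval c • (iteratedDeriv j g) (c * h)‖)
      ≤ ‖K‖ * (h ^ j * (M₁ * M₂)) := by
        apply mul_le_mul_of_nonneg_left _ (norm_nonneg K)
        exact mul_le_mul_of_nonneg_left hI (pow_nonneg hh.1 j)
    _ = |K| * (M₁ * M₂) * h ^ j := by rw [Real.norm_eq_abs]; ring
    _ ≤ (|K| * (M₁ * M₂) + 1) * h ^ j := by
        apply mul_le_mul_of_nonneg_right (by linarith) (pow_nonneg hh.1 j)
end

section
/- Let E be a real or complex Banach space, h₀ > 0, and let g : ℝ → E be the sum of a power series centered at 0 with radius of convergence strictly greater than h₀, with ℓ-th Taylor coefficient g^{(ℓ)}(0)/ℓ!. Define φ_{jℓ} = (1/ℓ!)∫_0^1 P_j(c) c^ℓ dc. Then: (i) φ_{jℓ} = 0 for all ℓ < j; (ii) |φ_{jℓ}| ≤ √(2j+1)/ℓ! for all ℓ; and (iii) for every h ∈ [0, h₀], the series Σ_{ℓ=j}^∞ φ_{jℓ} h^ℓ g^{(ℓ)}(0) converges absolutely in E and ∫_0^1 P_j(c) g(ch) dc =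 Σ_{ℓ=j}^∞ φ_{jℓ} h^ℓ g^{(ℓ)}(0). -/
open Polynomial intervalIntegral MeasureTheory

/-- The coefficients `φ_{jℓ} = (1/ℓ!) ∫_0^1 P_j(c) c^ℓ dc`. -/
noncomputable def phiCoeff (j ℓ : ℕ) : ℝ :=
  (1 / (Nat.factorial ℓ : ℝ)) * ∫ c in (0:ℝ)..1, legendreP j c * c ^ ℓ

section LegendreAux

lemma iteratedDeriv_poly (Q : ℝ[X]) (k : ℕ) :
    iteratedDeriv k (fun x => Q.eval x) = fun x => (derivative^[k] Q).eval x := by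
  induction k with
  | zero => simp
  | succ k ih =>
    rw [iteratedDeriv_succ, ih, Function.iterate_succ_apply']
    funext x
    exact Polynomial.deriv _

lemma poly_ibp (A B : ℝ[X]) :
    ∫ x in (0:ℝ)..1, (derivative A).eval x * B.eval x =
      (A.eval 1 * B.eval 1 - A.eval 0 * B.eval 0) -
        ∫ x in (0:ℝ)..1, A.eval x * (derivative B).eval x := by
  have h := intervalIntegral.integral_deriv_mul_eq_sub_of_hasDerivAt
    (u := fun x => A.eval x) (v := fun x => B.eval x)
    (u' := fun x => (derivative A).eval x) (v' := fun x => (derivative B).eval x)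
    (a := (0:ℝ)) (b := 1)
    (A.continuous.continuousOn) (B.continuous.continuousOn)
    (fun x _ => A.hasDerivAt x) (fun x _ => B.hasDerivAt x)
    ((derivative A).continuous.intervalIntegrable _ _)
    ((derivative B).continuous.intervalIntegrable _ _)
  rw [intervalIntegral.integral_add (f := fun x => (derivative A).eval x * B.eval x)
    (g := fun x => A.eval x * (derivative B).eval x)
    (((derivative A).continuous.mul B.continuous).intervalIntegrable _ _)
    ((A.continuous.mul (derivative B).continuous).intervalIntegrable _ _)] at h
  linarith

lemma dvd_derivative_of_dvd {a : ℝ} {m : ℕ} {p : ℝ[X]}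
    (h : (X - C a) ^ (m + 1) ∣ p) : (X - C a) ^ m ∣ derivative p := by
  obtain ⟨q, rfl⟩ := h
  rw [derivative_mul, derivative_pow]
  refine dvd_add ?_ ?_
  · have h1 : (X - C a) ^ m ∣ (X - C a) ^ (m + 1 - 1) := by simp
    exact ((h1.mul_left _).mul_right _).mul_right _
  · exact ((pow_dvd_pow _ (Nat.le_succ m)).mul_right _)

lemma dvd_iterate_derivative {a : ℝ} {m k : ℕ} {p : ℝ[X]}
    (h : (X - C a) ^ (m + k) ∣ p) : (X - C a) ^ m ∣ derivative^[k] p := by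
  induction k generalizing m p with
  | zero => simpa using h
  | succ k ih =>
    rw [Function.iterate_succ_apply]
    refine ih (dvd_derivative_of_dvd ?_)
    rwa [show m + k + 1 = m + (k + 1) by ring]

noncomputable def legQ (j : ℕ) : ℝ[X] := ((X : ℝ[X]) ^ 2 - X) ^ j

lemma legQ_eq (j : ℕ) : legQ j = (X - C 0) ^ j * (X - C 1) ^ j := by
  rw [legQ, ← mul_pow]
  simp
  ring

lemma iterate_derivative_legQ_eval {j k : ℕ} (hk : k < j) (a : ℝ) (ha : a = 0 ∨ a = 1) :
    (derivative^[k] (legQ j)).eval a = 0 := by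
  have hdvd : (X - C a) ^ (j - k) ∣ derivative^[k] (legQ j) := by
    apply dvd_iterate_derivative
    rw [show j - k + k = j from Nat.sub_add_cancel hk.le, legQ_eq]
    rcases ha with rfl | rfl
    · exact Dvd.dvd.mul_right dvd_rfl _
    · exact Dvd.dvd.mul_left dvd_rfl _
  obtain ⟨q, hq⟩ := hdvd
  rw [hq, eval_mul, eval_pow, eval_sub, eval_X, eval_C, sub_self,
    zero_pow (Nat.sub_ne_zero_of_lt hk), zero_mul]

lemma legQ_ibp (j : ℕ) : ∀ k ≤ j, ∀ B : ℝ[X],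
    ∫ x in (0:ℝ)..1, (derivative^[k] (legQ j)).eval x * B.eval x =
      (-1 : ℝ) ^ k * ∫ x in (0:ℝ)..1, (legQ j).eval x * (derivative^[k] B).eval x := by
  intro k
  induction k with
  | zero => intro _ B; simp
  | succ k ih =>
    intro hk B
    rw [Function.iterate_succ_apply', poly_ibp,
      iterate_derivative_legQ_eval (Nat.lt_of_succ_le hk) 1 (Or.inr rfl),
      iterate_derivative_legQ_eval (Nat.lt_of_succ_le hk) 0 (Or.inl rfl),
      ih (Nat.le_of_succ_le hk) (derivative B), ← Function.iterate_succ_apply]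
    ring

lemma betaNat (b a : ℕ) : ∫ x in (0:ℝ)..1, x ^ a * (1 - x) ^ b =
    (Nat.factorial a : ℝ) * (Nat.factorial b) / (Nat.factorial (a + b + 1)) := by
  induction b generalizing a with
  | zero =>
    simp only [pow_zero, mul_one, integral_pow, one_pow, Nat.add_zero, Nat.factorial_succ,
      Nat.cast_mul, Nat.cast_one]
    rw [zero_pow (by positivity), sub_zero]
    have : (Nat.factorial a : ℝ) ≠ 0 := by positivity
    push_cast
    field_simp
    simp
  | succ b ih =>
    have key : ∫ x in (0:ℝ)..1,
        ((a+1:ℝ) * x ^ a) * (1-x)^(b+1) + x^(a+1) * ((b+1) * (1-x)^b * (-1)) =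
        (1:ℝ)^(a+1) * (1-1)^(b+1) - 0^(a+1) * (1-0)^(b+1) := by
      apply integral_deriv_mul_eq_sub_of_hasDerivAt
      · exact (continuous_pow _).continuousOn
      · exact ((continuous_const.sub continuous_id).pow _).continuousOn
      · intro x _
        simpa using hasDerivAt_pow (a+1) x
      · intro x _
        have h1 : HasDerivAt (fun x : ℝ => 1 - x) (-1) x := by
          simpa using (hasDerivAt_id x).const_sub 1
        simpa using h1.fun_pow (b+1)
      · exact (continuous_const.mul (continuous_pow _)).intervalIntegrable _ _
      · exact ((continuous_const.mul ((continuous_const.sub continuous_id).pow _)).mul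
          continuous_const).intervalIntegrable _ _
    have i1 : IntervalIntegrable (fun x : ℝ => ((a+1:ℝ) * x ^ a) * (1-x)^(b+1))
        MeasureTheory.volume 0 1 := by
      apply Continuous.intervalIntegrable; continuity
    have i2 : IntervalIntegrable (fun x : ℝ => x^(a+1) * ((b+1:ℝ) * (1-x)^b * (-1)))
        MeasureTheory.volume 0 1 := by
      apply Continuous.intervalIntegrable; continuity
    rw [intervalIntegral.integral_add i1 i2] at key
    have e1 : ∫ x in (0:ℝ)..1, ((a+1:ℝ) * x ^ a) * (1-x)^(b+1) =
        (a+1:ℝ) * ∫ x in (0:ℝ)..1, x ^ a * (1-x)^(b+1) := by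
      rw [← intervalIntegral.integral_const_mul]
      congr 1; funext x; ring
    have e2 : ∫ x in (0:ℝ)..1, x^(a+1) * ((b+1:ℝ) * (1-x)^b * (-1)) =
        -((b+1:ℝ) * ∫ x in (0:ℝ)..1, x ^ (a+1) * (1-x)^b) := by
      rw [← intervalIntegral.integral_const_mul, ← intervalIntegral.integral_neg]
      congr 1; funext x; ring
    rw [e1, e2, ih (a+1)] at key
    have ha : (a:ℝ) + 1 ≠ 0 := by positivity
    have hf : (Nat.factorial (a + 1 + b + 1) : ℝ) ≠ 0 := by positivity
    have heq : (a+1:ℝ) * ∫ x in (0:ℝ)..1, x ^ a * (1-x)^(b+1) =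
        (b+1:ℝ) * ((Nat.factorial (a+1) : ℝ) * (Nat.factorial b) / (Nat.factorial (a + 1 + b + 1))) := by
      norm_num at key
      linarith [key]
    have harr : a + (b+1) + 1 = a + 1 + b + 1 := by ring
    rw [harr]
    rw [Nat.factorial_succ (a), Nat.factorial_succ b] at *
    field_simp at heq ⊢
    push_cast at heq ⊢
    nlinarith [heq]

lemma legendreP_eq (j : ℕ) : legendreP j = fun x =>
    (Real.sqrt (2 * (j : ℝ) + 1) / (Nat.factorial j : ℝ)) *
      (derivative^[j] (legQ j)).eval x := by
  unfold legendreP legQ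
  rw [show (fun y : ℝ => (y ^ 2 - y) ^ j) =
      (fun y : ℝ => (((X : ℝ[X]) ^ 2 - X) ^ j).eval y) by funext y; simp,
    iteratedDeriv_poly]

lemma integral_legendreP_mul_pow (j ℓ : ℕ) :
    ∫ x in (0:ℝ)..1, legendreP j x * x ^ ℓ =
      (Real.sqrt (2 * (j : ℝ) + 1) / (Nat.factorial j : ℝ)) * ((-1:ℝ) ^ j *
        ∫ x in (0:ℝ)..1, (legQ j).eval x * (derivative^[j] ((X : ℝ[X]) ^ ℓ)).eval x) := by
  rw [legendreP_eq]
  have : ∀ x : ℝ, (Real.sqrt (2 * (j : ℝ) + 1) / (Nat.factorial j : ℝ)) *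
      (derivative^[j] (legQ j)).eval x * x ^ ℓ =
      (Real.sqrt (2 * (j : ℝ) + 1) / (Nat.factorial j : ℝ)) *
      ((derivative^[j] (legQ j)).eval x * ((X : ℝ[X]) ^ ℓ).eval x) := by
    intro x; simp; ring
  simp only [this]
  rw [intervalIntegral.integral_const_mul, legQ_ibp j j le_rfl]

lemma phiCoeff_eq_zero {j ℓ : ℕ} (h : ℓ < j) : phiCoeff j ℓ = 0 := by
  unfold phiCoeff
  rw [integral_legendreP_mul_pow, Polynomial.iterate_derivative_X_pow_eq_natCast_mul,
    Nat.descFactorial_eq_zero_iff_lt.mpr h]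
  simp

lemma phiCoeff_eq {j ℓ : ℕ} (h : j ≤ ℓ) : phiCoeff j ℓ =
    Real.sqrt (2 * (j : ℝ) + 1) * (Nat.descFactorial ℓ j : ℝ) /
      (Nat.factorial (ℓ + j + 1) : ℝ) := by
  unfold phiCoeff
  rw [integral_legendreP_mul_pow, Polynomial.iterate_derivative_X_pow_eq_natCast_mul]
  have key : ∫ x in (0:ℝ)..1, (legQ j).eval x *
      (((Nat.descFactorial ℓ j : ℝ[X])) * X ^ (ℓ - j)).eval x =
      (Nat.descFactorial ℓ j : ℝ) * ((-1:ℝ)^j *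
        ((Nat.factorial ℓ : ℝ) * (Nat.factorial j) / (Nat.factorial (ℓ + j + 1)))) := by
    rw [← betaNat j ℓ, ← intervalIntegral.integral_const_mul,
      ← intervalIntegral.integral_const_mul]
    apply intervalIntegral.integral_congr
    intro x _
    simp only [legQ, eval_mul, eval_pow, eval_sub, eval_X, eval_natCast]
    have hx : (x ^ 2 - x) ^ j = (-1:ℝ)^j * (x ^ j * (1 - x) ^ j) := by
      rw [show x ^ 2 - x = (-1) * (x * (1 - x)) by ring, mul_pow, mul_pow]
    rw [hx]
    have hp : x ^ j * x ^ (ℓ - j) = x ^ ℓ := by rw [← pow_add, Nat.add_sub_cancel' h]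
    linear_combination ((-1:ℝ)^j * (Nat.descFactorial ℓ j : ℝ) * (1-x)^j) * hp
  rw [key]
  have h1 : (Nat.factorial j : ℝ) ≠ 0 := by positivity
  have h2 : (Nat.factorial ℓ : ℝ) ≠ 0 := by positivity
  have h3 : (Nat.factorial (ℓ + j + 1) : ℝ) ≠ 0 := by positivity
  have h4 : ((-1:ℝ)^j) * ((-1:ℝ)^j) = 1 := by
    rw [← pow_add, ← two_mul, pow_mul]; norm_num
  field_simp
  ring_nf
  rw [mul_comm j 2, pow_mul]
  norm_num

lemma pow_mul_factorial_le (ℓ : ℕ) : ∀ j : ℕ, ℓ ^ j * Nat.factorial ℓ ≤ Nat.factorial (ℓ + j)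
  | 0 => by simp
  | (j+1) => by
    calc ℓ ^ (j+1) * Nat.factorial ℓ = ℓ * (ℓ ^ j * Nat.factorial ℓ) := by ring
    _ ≤ ℓ * Nat.factorial (ℓ + j) := Nat.mul_le_mul_left _ (pow_mul_factorial_le ℓ j)
    _ ≤ (ℓ + j + 1) * Nat.factorial (ℓ + j) := Nat.mul_le_mul_right _ (by omega)
    _ = Nat.factorial (ℓ + (j+1)) := by
        rw [show ℓ + (j+1) = (ℓ+j)+1 by omega, Nat.factorial_succ]

lemma nat_key (ℓ j : ℕ) :
    Nat.descFactorial ℓ j * Nat.factorial ℓ ≤ Nat.factorial (ℓ + j + 1) :=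
  calc Nat.descFactorial ℓ j * Nat.factorial ℓ ≤ ℓ ^ j * Nat.factorial ℓ :=
        Nat.mul_le_mul_right _ (Nat.descFactorial_le_pow _ _)
    _ ≤ Nat.factorial (ℓ + j) := pow_mul_factorial_le ℓ j
    _ ≤ Nat.factorial (ℓ + j + 1) := Nat.factorial_le (Nat.le_succ _)

lemma phiCoeff_abs_le (j ℓ : ℕ) :
    |phiCoeff j ℓ| ≤ Real.sqrt (2 * (j : ℝ) + 1) / (Nat.factorial ℓ : ℝ) := by
  have hs : (0:ℝ) ≤ Real.sqrt (2 * (j : ℝ) + 1) := Real.sqrt_nonneg _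
  have hℓ : (0:ℝ) < (Nat.factorial ℓ : ℝ) := by positivity
  rcases lt_or_ge ℓ j with h | h
  · rw [phiCoeff_eq_zero h, abs_zero]
    positivity
  · rw [phiCoeff_eq h, abs_of_nonneg (by positivity)]
    rw [div_le_div_iff₀ (by positivity) hℓ]
    calc Real.sqrt (2 * (j : ℝ) + 1) * (Nat.descFactorial ℓ j : ℝ) * (Nat.factorial ℓ : ℝ)
        = Real.sqrt (2 * (j : ℝ) + 1) *
            ((Nat.descFactorial ℓ j * Nat.factorial ℓ : ℕ) : ℝ) := by push_cast; ring
      _ ≤ Real.sqrt (2 * (j : ℝ) + 1) * ((Nat.factorial (ℓ + j + 1) : ℕ) : ℝ) := by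
          apply mul_le_mul_of_nonneg_left _ hs
          exact_mod_cast nat_key ℓ j

lemma legendreP_continuous (j : ℕ) : Continuous (legendreP j) := by
  rw [legendreP_eq]
  exact continuous_const.mul (Polynomial.continuous _)

end LegendreAux

/-- Expansion of `∫_0^1 P_j(c) g(ch) dc` along the Taylor coefficients of `g`:
(i) `φ_{jℓ} = 0` for `ℓ < j`; (ii) `|φ_{jℓ}| ≤ √(2j+1)/ℓ!`; (iii) for `h ∈ [0, h₀]` the
series `Σ_{ℓ=j}^∞ φ_{jℓ} h^ℓ g^{(ℓ)}(0)` converges absolutely and equals the integral. -/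
theorem integral_legendreP_smul_taylor_expansion
    {E : Type*} [NormedAddCommGroup E] [NormedSpace ℝ E] [CompleteSpace E]
    (h₀ : ℝ) (hh₀ : 0 < h₀) (g : ℝ → E) (p : FormalMultilinearSeries ℝ ℝ E) (r : ENNReal)
    (hr : ENNReal.ofReal h₀ < r) (hg : HasFPowerSeriesOnBall g p 0 r) (j : ℕ) :
    (∀ ℓ : ℕ, ℓ < j → phiCoeff j ℓ = 0) ∧
    (∀ ℓ : ℕ, |phiCoeff j ℓ| ≤ Real.sqrt (2 * (j : ℝ) + 1) / (Nat.factorial ℓ : ℝ)) ∧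
    (∀ h ∈ Set.Icc (0:ℝ) h₀,
      Summable (fun ℓ : ℕ =>
        ‖(phiCoeff j (j + ℓ) * h ^ (j + ℓ)) • iteratedDeriv (j + ℓ) g 0‖) ∧
      HasSum (fun ℓ : ℕ => (phiCoeff j (j + ℓ) * h ^ (j + ℓ)) • iteratedDeriv (j + ℓ) g 0)
        (∫ c in (0:ℝ)..1, legendreP j c • g (c * h))) := by
  refine ⟨fun ℓ hl => phiCoeff_eq_zero hl, fun ℓ => phiCoeff_abs_le j ℓ, ?_⟩
  -- iterated derivatives are factorial times coefficients
  have hD : ∀ ℓ : ℕ, iteratedDeriv ℓ g 0 = (Nat.factorial ℓ : ℝ) • p.coeff ℓ := by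
    intro ℓ
    have h1 := hg.factorial_smul (1 : ℝ) ℓ
    rw [FormalMultilinearSeries.apply_eq_pow_smul_coeff, one_pow, one_smul] at h1
    rw [iteratedDeriv_eq_iteratedFDeriv, ← h1, ← Nat.cast_smul_eq_nsmul ℝ]
  -- summability of coefficients against h₀
  have hrad : (h₀.toNNReal : ENNReal) < p.radius := by
    have : (h₀.toNNReal : ENNReal) = ENNReal.ofReal h₀ := rfl
    rw [this]
    exact lt_of_lt_of_le hr hg.r_le
  have hsum_p : Summable (fun ℓ : ℕ => ‖p ℓ‖ * h₀ ^ ℓ) := by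
    have := p.summable_norm_mul_pow hrad
    simpa [Real.coe_toNNReal _ hh₀.le] using this
  intro h hIcc
  obtain ⟨hh0, hhh₀⟩ := hIcc
  -- bound for Legendre polynomial on [0,1]
  obtain ⟨M, hM⟩ := (isCompact_Icc (a := (0:ℝ)) (b := 1)).exists_bound_of_continuousOn
    (legendreP_continuous j).continuousOn
  have hM0 : 0 ≤ M := le_trans (norm_nonneg _) (hM 0 (by norm_num))
  set F : ℕ → ℝ → E := fun ℓ c => legendreP j c • ((c * h) ^ ℓ • p.coeff ℓ) with hF
  have hFc : ∀ ℓ, Continuous (F ℓ) := by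
    intro ℓ
    exact (legendreP_continuous j).smul
      (((continuous_id.mul continuous_const).pow ℓ).smul continuous_const)
  have hF_int : ∀ ℓ, Integrable (F ℓ) (volume.restrict (Set.Ioc (0:ℝ) 1)) := fun ℓ =>
    (hFc ℓ).integrableOn_Ioc
  -- pointwise bound
  have hbound : ∀ ℓ, ∀ c ∈ Set.Ioc (0:ℝ) 1, ‖F ℓ c‖ ≤ M * (‖p ℓ‖ * h₀ ^ ℓ) := by
    intro ℓ c hc
    have hc01 : c ∈ Set.Icc (0:ℝ) 1 := ⟨hc.1.le, hc.2⟩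
    have hch : |c * h| ≤ h₀ := by
      rw [abs_of_nonneg (mul_nonneg hc.1.le hh0)]
      calc c * h ≤ 1 * h₀ := mul_le_mul hc.2 hhh₀ hh0 zero_le_one
        _ = h₀ := one_mul _
    have : ‖F ℓ c‖ = |legendreP j c| * (|c * h| ^ ℓ * ‖p.coeff ℓ‖) := by
      rw [hF]
      rw [norm_smul, norm_smul, norm_pow, Real.norm_eq_abs, Real.norm_eq_abs]
    rw [this, ← FormalMultilinearSeries.norm_apply_eq_norm_coef]
    have h1 : |legendreP j c| ≤ M := by simpa using hM c hc01
    have h2 : |c * h| ^ ℓ ≤ h₀ ^ ℓ := pow_le_pow_left₀ (abs_nonneg _) hch ℓ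
    calc |legendreP j c| * (|c * h| ^ ℓ * ‖p ℓ‖)
        ≤ M * (h₀ ^ ℓ * ‖p ℓ‖) := by
          apply mul_le_mul h1 (mul_le_mul_of_nonneg_right h2 (norm_nonneg _))
            (by positivity) hM0
      _ = M * (‖p ℓ‖ * h₀ ^ ℓ) := by ring
  have hF_sum : Summable fun ℓ => ∫ c in Set.Ioc (0:ℝ) 1, ‖F ℓ c‖ := by
    apply Summable.of_nonneg_of_le
      (fun ℓ => integral_nonneg (fun c => norm_nonneg _))
      (fun ℓ => ?_) (hsum_p.mul_left M)
    calc (∫ c in Set.Ioc (0:ℝ) 1, ‖F ℓ c‖)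
        ≤ ∫ _c in Set.Ioc (0:ℝ) 1, M * (‖p ℓ‖ * h₀ ^ ℓ) := by
          apply setIntegral_mono_on ((hFc ℓ).norm.integrableOn_Ioc)
            (integrableOn_const (by simp))
            measurableSet_Ioc (hbound ℓ)
      _ = M * (‖p ℓ‖ * h₀ ^ ℓ) := by simp
  -- pointwise sum identity
  have htsum : ∀ c ∈ Set.Ioc (0:ℝ) 1, HasSum (fun ℓ => F ℓ c) (legendreP j c • g (c * h)) := by
    intro c hc
    have hmem : c * h ∈ Metric.eball (0:ℝ) r := by
      rw [Metric.mem_eball, edist_dist, dist_zero_right, Real.norm_eq_abs]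
      refine lt_of_le_of_lt (ENNReal.ofReal_le_ofReal ?_) hr
      rw [abs_of_nonneg (mul_nonneg hc.1.le hh0)]
      calc c * h ≤ 1 * h₀ := mul_le_mul hc.2 hhh₀ hh0 zero_le_one
        _ = h₀ := one_mul _
    have := hg.hasSum hmem
    rw [zero_add] at this
    simp only [FormalMultilinearSeries.apply_eq_pow_smul_coeff] at this
    exact this.const_smul (legendreP j c)
  have hmain := hasSum_integral_of_summable_integral_norm hF_int hF_sum
  -- identify the limit
  have hlim : (∫ c in Set.Ioc (0:ℝ) 1, ∑' ℓ, F ℓ c) =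
      ∫ c in (0:ℝ)..1, legendreP j c • g (c * h) := by
    rw [intervalIntegral.integral_of_le zero_le_one]
    apply setIntegral_congr_fun measurableSet_Ioc
    intro c hc
    exact (htsum c hc).tsum_eq
  -- identify each integral
  have hterm : ∀ ℓ, (∫ c in Set.Ioc (0:ℝ) 1, F ℓ c) =
      (phiCoeff j ℓ * h ^ ℓ) • iteratedDeriv ℓ g 0 := by
    intro ℓ
    have e1 : (∫ c in Set.Ioc (0:ℝ) 1, F ℓ c) = ∫ c in (0:ℝ)..1, F ℓ c :=
      (intervalIntegral.integral_of_le zero_le_one).symm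
    have e2 : ∀ c : ℝ, F ℓ c = (legendreP j c * c ^ ℓ * h ^ ℓ) • p.coeff ℓ := by
      intro c
      rw [hF]
      simp only [mul_pow, smul_smul]
      ring_nf
    rw [e1]
    simp only [e2]
    rw [intervalIntegral.integral_smul_const, intervalIntegral.integral_mul_const,
      hD ℓ, smul_smul]
    congr 1
    have hfac : (Nat.factorial ℓ : ℝ) ≠ 0 := by positivity
    have : (∫ c in (0:ℝ)..1, legendreP j c * c ^ ℓ) = (Nat.factorial ℓ : ℝ) * phiCoeff j ℓ := by
      rw [phiCoeff]; field_simp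
    rw [this]; ring
  simp only [hterm] at hmain
  rw [hlim] at hmain
  constructor
  · -- summability of norms
    apply Summable.of_nonneg_of_le (fun ℓ => norm_nonneg _) (fun ℓ => ?_)
      (((summable_nat_add_iff j).mpr (hsum_p.mul_left
        (Real.sqrt (2 * (j : ℝ) + 1)))).congr (fun ℓ => by rw [add_comm ℓ j]) )
    set n := j + ℓ with hn
    have hfac : (0:ℝ) < (Nat.factorial n : ℝ) := by positivity
    have b1 : |phiCoeff j n| ≤ Real.sqrt (2 * (j : ℝ) + 1) / (Nat.factorial n : ℝ) :=
      phiCoeff_abs_le j n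
    have b2 : h ^ n ≤ h₀ ^ n := pow_le_pow_left₀ hh0 hhh₀ n
    have hnorm : ‖(phiCoeff j n * h ^ n) • iteratedDeriv n g 0‖ =
        |phiCoeff j n| * h ^ n * ((Nat.factorial n : ℝ) * ‖p n‖) := by
      simp only [hD, norm_smul, Real.norm_eq_abs, abs_mul, abs_pow, abs_of_nonneg hh0,
        Nat.abs_cast, ← FormalMultilinearSeries.norm_apply_eq_norm_coef]
    rw [hnorm]
    calc |phiCoeff j n| * h ^ n * ((Nat.factorial n : ℝ) * ‖p n‖)
        ≤ (Real.sqrt (2 * (j : ℝ) + 1) / (Nat.factorial n : ℝ)) * h₀ ^ n *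
            ((Nat.factorial n : ℝ) * ‖p n‖) := by
          apply mul_le_mul _ le_rfl (by positivity) (by positivity)
          exact mul_le_mul b1 b2 (by positivity) (by positivity)
      _ = Real.sqrt (2 * (j : ℝ) + 1) * (‖p n‖ * h₀ ^ n) := by
          field_simp
  · -- the HasSum statement
    have hzero : ∀ i ∈ Finset.range j, (phiCoeff j i * h ^ i) • iteratedDeriv i g 0 = 0 := by
      intro i hi
      rw [phiCoeff_eq_zero (Finset.mem_range.mp hi), zero_mul, zero_smul]
    have hmain' : HasSum (fun ℓ : ℕ => (phiCoeff j ℓ * h ^ ℓ) • iteratedDeriv ℓ g 0)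
        ((∫ c in (0:ℝ)..1, legendreP j c • g (c * h)) +
          ∑ i ∈ Finset.range j, (phiCoeff j i * h ^ i) • iteratedDeriv i g 0) := by
      rw [Finset.sum_eq_zero hzero, add_zero]; exact hmain
    have hS := (hasSum_nat_add_iff (f := fun ℓ : ℕ => (phiCoeff j ℓ * h ^ ℓ) • iteratedDeriv ℓ g 0)
      j).mpr hmain'
    have heq : (fun n : ℕ => (phiCoeff j (n + j) * h ^ (n + j)) • iteratedDeriv (n + j) g 0) =
        (fun n : ℕ => (phiCoeff j (j + n) * h ^ (j + n)) • iteratedDeriv (j + n) g 0) := by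
      funext n; rw [add_comm]
    rw [heq] at hS
    exact hS
end

section
/- Let j ≥ 0, ρ > 1, and define Q_j(ξ) = ∫_0^1 P_j(c)/(ξ − c) dc for ξ ∈ ℂ with |ξ| = ρ. Then for every ξ with |ξ| = ρ, |Q_j(ξ)| ≤ √(2j+1)/((ρ − 1) ρ^j). -/
/-- `Q_j(ξ) = ∫_0^1 P_j(c)/(ξ - c) dc`. -/
noncomputable def legendreQ (j : ℕ) (ξ : ℂ) : ℂ :=
  ∫ c in (0:ℝ)..1, (legendreP j c : ℂ) / (ξ - (c : ℂ))

open Polynomial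

/-- The complexified polynomial `(X² - X)^j`. -/
noncomputable def legendreAux (j : ℕ) : Polynomial ℂ := (X ^ 2 - X) ^ j

lemma iteratedDeriv_polyeval_s5 (q : Polynomial ℝ) (n : ℕ) :
    iteratedDeriv n (fun x => q.eval x) = fun x => (derivative^[n] q).eval x := by
  induction n with
  | zero => simp
  | succ n ih =>
      rw [iteratedDeriv_succ, ih]
      funext x
      rw [Polynomial.deriv, Function.iterate_succ_apply']

lemma legendreP_complex (j : ℕ) (x : ℝ) :
    (legendreP j x : ℂ) = ((Real.sqrt (2 * (j : ℝ) + 1) / (Nat.factorial j : ℝ) : ℝ) : ℂ) *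
      (derivative^[j] (legendreAux j)).eval (x : ℂ) := by
  have hf : (fun y : ℝ => (y ^ 2 - y) ^ j) = fun y => (((X ^ 2 - X) ^ j : Polynomial ℝ)).eval y := by
    funext y; simp
  have h1 : iteratedDeriv j (fun y : ℝ => (y ^ 2 - y) ^ j) x
      = (derivative^[j] ((X ^ 2 - X) ^ j : Polynomial ℝ)).eval x := by
    rw [hf, iteratedDeriv_polyeval_s5]
  have h2 : (((derivative^[j] ((X ^ 2 - X) ^ j : Polynomial ℝ)).eval x : ℝ) : ℂ)
      = (derivative^[j] (legendreAux j)).eval (x : ℂ) := by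
    rw [← Complex.ofRealHom_eq_coe, ← Polynomial.eval₂_at_apply (Complex.ofRealHom) x,
      ← Polynomial.eval_map, ← Polynomial.iterate_derivative_map]
    congr 1
    simp [legendreAux, Polynomial.map_pow]
  rw [legendreP, Complex.ofReal_mul, h1, h2]

lemma legendreAux_vanish (j k : ℕ) (hk : k < j) (t : ℂ) (ht : t = 0 ∨ t = 1) :
    (derivative^[k] (legendreAux j)).eval t = 0 := by
  have hform : (X ^ 2 - X : Polynomial ℂ) = X * (X - 1) := by ring
  have hdvd : (X - C t) ^ j ∣ legendreAux j := by
    rcases ht with rfl | rfl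
    · refine pow_dvd_pow_of_dvd ?_ j
      rw [hform, map_zero, sub_zero]
      exact dvd_mul_right X (X - 1)
    · refine pow_dvd_pow_of_dvd ?_ j
      rw [hform, map_one]
      exact dvd_mul_left (X - 1) X
  have h2 : (X - C t) ^ (j - k) ∣ derivative^[k] (legendreAux j) :=
    Polynomial.pow_sub_dvd_iterate_derivative_of_pow_dvd k hdvd
  have h3 : (X - C t) ∣ derivative^[k] (legendreAux j) :=
    (dvd_pow_self _ (Nat.sub_ne_zero_of_lt hk)).trans h2
  exact Polynomial.dvd_iff_isRoot.mp h3


lemma legendre_ibp_step (j k : ℕ) (hk : k + 1 ≤ j) (ξ : ℂ)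
    (hne : ∀ c : ℝ, c ∈ Set.uIcc (0:ℝ) 1 → ξ - (c:ℂ) ≠ 0) :
    (∫ c in (0:ℝ)..1, (derivative^[j - k] (legendreAux j)).eval (c:ℂ) * (ξ - c) ^ (-(k + 1) : ℤ))
      = -((k : ℂ) + 1) *
        ∫ c in (0:ℝ)..1, (derivative^[j - (k + 1)] (legendreAux j)).eval (c:ℂ)
          * (ξ - c) ^ (-(k + 2) : ℤ) := by
  set p := legendreAux j
  set u : ℝ → ℂ := fun c => (derivative^[j - (k + 1)] p).eval (c:ℂ) with hu_def
  set u' : ℝ → ℂ := fun c => (derivative^[j - k] p).eval (c:ℂ) with hu'_def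
  set v : ℝ → ℂ := fun c => (ξ - c) ^ (-(k + 1) : ℤ) with hv_def
  set v' : ℝ → ℂ := fun c => ((k : ℂ) + 1) * (ξ - c) ^ (-(k + 2) : ℤ) with hv'_def
  have hjk : j - k = (j - (k + 1)) + 1 := by omega
  have hu : ∀ x ∈ Set.uIcc (0:ℝ) 1, HasDerivAt u (u' x) x := by
    intro x _
    have h1 : HasDerivAt (fun z : ℂ => (derivative^[j - (k + 1)] p).eval z)
        ((derivative (derivative^[j - (k + 1)] p)).eval (x:ℂ)) (x:ℂ) :=
      Polynomial.hasDerivAt _ _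
    have h2 := h1.comp_ofReal
    have h3 : derivative (derivative^[j - (k + 1)] p) = derivative^[j - k] p := by
      rw [hjk, Function.iterate_succ_apply']
    rwa [h3] at h2
  have hv : ∀ x ∈ Set.uIcc (0:ℝ) 1, HasDerivAt v (v' x) x := by
    intro x hx
    have h0 := hne x hx
    have h1 : HasDerivAt (fun z : ℂ => ξ - z) (-1) (x:ℂ) := by
      simpa using ((hasDerivAt_id (x:ℂ)).const_sub ξ)
    have h2 := (hasDerivAt_zpow (-(k + 1) : ℤ) (ξ - (x:ℂ)) (Or.inl h0)).comp (x:ℂ) h1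
    have h3 := h2.comp_ofReal
    have h4 : ((-(k + 1) : ℤ) : ℂ) * (ξ - (x:ℂ)) ^ ((-(k + 1) : ℤ) - 1) * (-1)
        = ((k : ℂ) + 1) * (ξ - (x:ℂ)) ^ (-(k + 2) : ℤ) := by
      have he : (-(k + 1) : ℤ) - 1 = (-(k + 2) : ℤ) := by ring
      rw [he]; push_cast; ring
    rw [h4] at h3
    exact h3
  have hcu : Continuous u := Continuous.comp (Polynomial.continuous _) Complex.continuous_ofReal
  have hcu' : Continuous u' := Continuous.comp (Polynomial.continuous _) Complex.continuous_ofReal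
  have hcsub : Continuous (fun c : ℝ => ξ - (c:ℂ)) := continuous_const.sub Complex.continuous_ofReal
  have hcv : ContinuousOn v (Set.uIcc (0:ℝ) 1) := by
    exact (hcsub.continuousOn).zpow₀ _ (fun x hx => Or.inl (hne x hx))
  have hcv' : ContinuousOn v' (Set.uIcc (0:ℝ) 1) := by
    exact continuousOn_const.mul ((hcsub.continuousOn).zpow₀ _ (fun x hx => Or.inl (hne x hx)))
  have hiu' : IntervalIntegrable u' MeasureTheory.volume 0 1 := hcu'.intervalIntegrable 0 1
  have hiv' : IntervalIntegrable v' MeasureTheory.volume 0 1 := hcv'.intervalIntegrable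
  have hibp := intervalIntegral.integral_deriv_mul_eq_sub hu hv hiu' hiv'
  have hu0 : u 0 = 0 := by
    simp only [hu_def]
    simpa using legendreAux_vanish j (j - (k + 1)) (by omega) ((0:ℝ):ℂ) (Or.inl (by norm_num))
  have hu1 : u 1 = 0 := by
    simp only [hu_def]
    simpa using legendreAux_vanish j (j - (k + 1)) (by omega) ((1:ℝ):ℂ) (Or.inr (by norm_num))
  rw [hu0, hu1, zero_mul, zero_mul, sub_zero] at hibp
  have hi1 : IntervalIntegrable (fun x => u' x * v x) MeasureTheory.volume 0 1 :=
    ((hcu'.continuousOn).mul hcv).intervalIntegrable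
  have hi2 : IntervalIntegrable (fun x => u x * v' x) MeasureTheory.volume 0 1 :=
    ((hcu.continuousOn).mul hcv').intervalIntegrable
  rw [intervalIntegral.integral_add hi1 hi2] at hibp
  have hsplit : (∫ x in (0:ℝ)..1, u x * v' x)
      = ((k : ℂ) + 1) * ∫ x in (0:ℝ)..1, u x * (ξ - x) ^ (-(k + 2) : ℤ) := by
    rw [← intervalIntegral.integral_const_mul]
    congr 1; funext x; simp only [hv'_def]; ring
  have := eq_neg_of_add_eq_zero_left hibp
  rw [hsplit] at this
  exact this.trans (neg_mul _ _).symm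

lemma legendreS_abs (j : ℕ) (ξ : ℂ)
    (hne : ∀ c : ℝ, c ∈ Set.uIcc (0:ℝ) 1 → ξ - (c:ℂ) ≠ 0) :
    ∀ k, k ≤ j →
    ‖(∫ c in (0:ℝ)..1, (derivative^[j] (legendreAux j)).eval (c:ℂ) * (ξ - c) ^ (-1 : ℤ))‖
      = (k.factorial : ℝ) * ‖(∫ c in (0:ℝ)..1,
          (derivative^[j - k] (legendreAux j)).eval (c:ℂ) * (ξ - c) ^ (-(k + 1) : ℤ))‖ := by
  intro k
  induction k with
  | zero => intro _; norm_num
  | succ k ih =>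
      intro hk1
      have IH := ih (by omega)
      have hstep := legendre_ibp_step j k hk1 ξ hne
      have hcast : (-((k + 1 : ℕ) + 1) : ℤ) = (-(k + 2) : ℤ) := by push_cast; ring
      rw [IH, hstep, hcast, norm_mul]
      have habs : ‖(-((k : ℂ) + 1))‖ = (k : ℝ) + 1 := by
        rw [norm_neg]
        have : ((k : ℂ) + 1) = ((k + 1 : ℕ) : ℂ) := by push_cast; ring
        rw [this, Complex.norm_natCast]
        push_cast; ring
      rw [habs, Nat.factorial_succ]
      push_cast; ring

open Polynomial in
/-- Lemma 2.3: for `ρ > 1` and `|ξ| = ρ`, `|Q_j(ξ)| ≤ √(2j+1)/((ρ-1)ρ^j)`. -/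
theorem legendreQ_bound (j : ℕ) (ρ : ℝ) (hρ : 1 < ρ) (ξ : ℂ) (hξ : ‖ξ‖ = ρ) :
    ‖legendreQ j ξ‖ ≤ Real.sqrt (2 * (j : ℝ) + 1) / ((ρ - 1) * ρ ^ j) := by
  have hρ0 : (0:ℝ) < ρ := lt_trans one_pos hρ
  have hρ1 : (0:ℝ) < ρ - 1 := by linarith
  -- basic lower bound on |ξ - c|
  have habs_lb : ∀ c : ℝ, 0 ≤ c → c ≤ 1 → ρ - c ≤ ‖ξ - c‖ := by
    intro c hc0 hc1
    have h := norm_sub_norm_le ξ ((c:ℂ))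
    rw [Complex.norm_real, Real.norm_eq_abs,
      abs_of_nonneg hc0, hξ] at h
    exact h
  have hne : ∀ c : ℝ, c ∈ Set.uIcc (0:ℝ) 1 → ξ - (c:ℂ) ≠ 0 := by
    intro c hc
    rw [Set.uIcc_of_le zero_le_one] at hc
    have h1 := habs_lb c hc.1 hc.2
    have h2 : (0:ℝ) < ρ - c := by linarith [hc.2]
    intro h
    rw [h, norm_zero] at h1
    linarith
  -- rewrite legendreQ
  set K : ℝ := Real.sqrt (2 * (j : ℝ) + 1) / (Nat.factorial j : ℝ) with hK
  have hK0 : 0 ≤ K := div_nonneg (Real.sqrt_nonneg _) (Nat.cast_nonneg _)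
  have hQ : legendreQ j ξ = (K : ℂ) *
      ∫ c in (0:ℝ)..1, (derivative^[j] (legendreAux j)).eval (c:ℂ) * (ξ - c) ^ (-1 : ℤ) := by
    rw [legendreQ, ← intervalIntegral.integral_const_mul]
    apply intervalIntegral.integral_congr
    intro c _
    show ((legendreP j c : ℂ)) / (ξ - (c:ℂ))
      = (K:ℂ) * ((derivative^[j] (legendreAux j)).eval (c:ℂ) * (ξ - c) ^ (-1:ℤ))
    rw [legendreP_complex, div_eq_mul_inv, ← zpow_neg_one, mul_assoc]
  -- the final integral bound
  have hbound : ‖(∫ c in (0:ℝ)..1,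
      (derivative^[j - j] (legendreAux j)).eval (c:ℂ) * (ξ - c) ^ (-(j + 1) : ℤ))‖
      ≤ ((ρ - 1) * ρ ^ j)⁻¹ := by
    have key : ∀ x ∈ Set.uIoc (0:ℝ) 1,
        ‖(derivative^[j - j] (legendreAux j)).eval (x:ℂ) * (ξ - x) ^ (-(j + 1) : ℤ)‖
          ≤ ((ρ - 1) * ρ ^ j)⁻¹ := by
      intro x hx
      rw [Set.uIoc_of_le zero_le_one] at hx
      obtain ⟨hx0, hx1⟩ := hx
      have hA := habs_lb x hx0.le hx1
      set A : ℝ := ‖ξ - (x:ℝ)‖ with hA_def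
      have hρx : (0:ℝ) < ρ - x := by linarith
      have hA0 : (0:ℝ) < A := lt_of_lt_of_le hρx hA
      have hAρ1 : ρ - 1 ≤ A := le_trans (by linarith) hA
      rw [Nat.sub_self, Function.iterate_zero_apply]
      have heval : (legendreAux j).eval (x:ℂ) = (((x^2 - x : ℝ)) : ℂ) ^ j := by
        rw [legendreAux]; push_cast; simp
      rw [norm_mul, heval, norm_pow, Complex.norm_real, Real.norm_eq_abs, norm_zpow,
        ← hA_def]
      have habsx : |x ^ 2 - x| = x - x ^ 2 := by
        rw [abs_of_nonpos]; · ring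
        nlinarith
      rw [habsx]
      have hxx : x - x ^ 2 ≤ (ρ - x) / ρ := by
        rw [le_div_iff₀ hρ0]
        nlinarith [sq_nonneg (1 - x), mul_nonneg hρ1.le (sub_nonneg.mpr hx1),
          mul_nonneg hρ1.le (sq_nonneg x)]
      have hnum : (x - x ^ 2) ^ j ≤ (ρ - x) ^ j / ρ ^ j := by
        rw [← div_pow]
        exact pow_le_pow_left₀ (by nlinarith) hxx j
      have hAexp : A ^ (-(j + 1) : ℤ) = (A ^ (j + 1))⁻¹ := by
        have : (-(j + 1) : ℤ) = -((j + 1 : ℕ) : ℤ) := by push_cast; ring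
        rw [this, zpow_neg, zpow_natCast]
      rw [hAexp]
      have hden : (ρ - x) ^ j * (ρ - 1) ≤ A ^ (j + 1) := by
        rw [pow_succ]
        exact mul_le_mul (pow_le_pow_left₀ hρx.le hA j) hAρ1 hρ1.le (pow_nonneg hA0.le j)
      have hden0 : (0:ℝ) < (ρ - x) ^ j * (ρ - 1) := by positivity
      calc (x - x ^ 2) ^ j * (A ^ (j + 1))⁻¹
          = (x - x ^ 2) ^ j / A ^ (j + 1) := by rw [div_eq_mul_inv]
        _ ≤ ((ρ - x) ^ j / ρ ^ j) / ((ρ - x) ^ j * (ρ - 1)) := by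
            apply div_le_div₀ (by positivity) hnum hden0 hden
        _ = ((ρ - 1) * ρ ^ j)⁻¹ := by field_simp
    have h := intervalIntegral.norm_integral_le_of_norm_le_const key
    simpa using h
  -- combine
  rw [hQ, norm_mul, Complex.norm_real, Real.norm_eq_abs, abs_of_nonneg hK0,
    legendreS_abs j ξ hne j le_rfl]
  have hfac0 : (0:ℝ) < (Nat.factorial j : ℝ) := by
    exact_mod_cast Nat.factorial_pos j
  calc K * ((Nat.factorial j : ℝ) * ‖(∫ c in (0:ℝ)..1,
        (derivative^[j - j] (legendreAux j)).eval (c:ℂ) * (ξ - c) ^ (-(j + 1) : ℤ))‖)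
      ≤ K * ((Nat.factorial j : ℝ) * ((ρ - 1) * ρ ^ j)⁻¹) := by
        apply mul_le_mul_of_nonneg_left _ hK0
        exact mul_le_mul_of_nonneg_left hbound (Nat.cast_nonneg _)
    _ = Real.sqrt (2 * (j : ℝ) + 1) / ((ρ - 1) * ρ ^ j) := by
        rw [hK]; field_simp
end

section
/- Let E be a complex Banach space, r* > 0, and let g : ℂ → E be analytic on an open set containing the closed ball B̄(0, r*). Fix h₀ with 0 < h₀ < r*. Then there exists a constant κ > 0, independent of h, such that for all h ∈ (0, h₀] and all j ≥ 0, ‖∫_0^1 P_j(c) g(ch) dc‖ ≤ κ · √(2j+1) · (h/r*)^j. -/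
open Polynomial intervalIntegral MeasureTheory Set

lemma iteratedDeriv_polynomial_eval (p : Polynomial ℝ) (n : ℕ) :
    iteratedDeriv n (fun y : ℝ => p.eval y) = fun y => (derivative^[n] p).eval y := by
  induction n with
  | zero => simp
  | succ n ih =>
    rw [iteratedDeriv_succ, ih, Function.iterate_succ_apply']
    funext y
    exact Polynomial.deriv _

lemma cauchy_est {E : Type*} [NormedAddCommGroup E] [NormedSpace ℂ E] [CompleteSpace E]
    (rstar M : ℝ) (g : ℂ → E)
    (hd : DifferentiableOn ℂ g (Metric.closedBall 0 rstar))
    (hM : ∀ z ∈ Metric.closedBall (0:ℂ) rstar, ‖g z‖ ≤ M)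
    (z : ℂ) (hz : ‖z‖ < rstar) (n : ℕ) :
    ‖iteratedDeriv n g z‖ ≤ n.factorial * M / (rstar - ‖z‖) ^ n := by
  set R : ℝ := rstar - ‖z‖ with hRdef
  have hR : 0 < R := sub_pos.mpr hz
  set R' : NNReal := ⟨R, hR.le⟩ with hR'def
  have hball : Metric.closedBall z R ⊆ Metric.closedBall (0:ℂ) rstar := by
    apply Metric.closedBall_subset_closedBall'
    simp [dist_eq_norm, hRdef]
  have hp : HasFPowerSeriesOnBall g (cauchyPowerSeries g z R') z R' :=
    (hd.mono (by exact hball)).hasFPowerSeriesOnBall (by exact_mod_cast hR)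
  have hfact := hp.factorial_smul (1:ℂ) n
  have h1 : iteratedDeriv n g z = n.factorial • (cauchyPowerSeries g z R' n fun _ => 1) := by
    rw [iteratedDeriv_eq_iteratedFDeriv, ← hfact]
  have h2 : ‖iteratedDeriv n g z‖ = n.factorial * ‖cauchyPowerSeries g z R' n fun _ => 1‖ := by
    rw [h1, ← Nat.cast_smul_eq_nsmul ℝ, norm_smul]
    simp
  have h3 : ‖cauchyPowerSeries g z R' n fun _ => (1:ℂ)‖ ≤ ‖cauchyPowerSeries g z R' n‖ := by
    have := (cauchyPowerSeries g z R' n).le_opNorm fun _ => (1:ℂ)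
    simpa using this
  have h4 := norm_cauchyPowerSeries_le g z R' n
  have hMnn : 0 ≤ M := le_trans (norm_nonneg _) (hM 0 (by simpa using ((norm_nonneg z).trans_lt hz).le))
  have hI : (∫ θ in (0:ℝ)..2 * Real.pi, ‖g (circleMap z R' θ)‖) ≤ 2 * Real.pi * M := by
    have hle : ∀ θ ∈ Set.Icc (0:ℝ) (2 * Real.pi), ‖g (circleMap z R' θ)‖ ≤ M := by
      intro θ _
      apply hM
      have : circleMap z R' θ ∈ Metric.closedBall z R := by
        have := circleMap_mem_closedBall z hR.le θ
        exact this
      exact hball this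
    calc (∫ θ in (0:ℝ)..2 * Real.pi, ‖g (circleMap z R' θ)‖)
        ≤ ∫ _ in (0:ℝ)..2 * Real.pi, M := by
          apply intervalIntegral.integral_mono_on Real.two_pi_pos.le _ intervalIntegrable_const hle
          apply ContinuousOn.intervalIntegrable
          apply Continuous.continuousOn
          exact (hd.continuousOn.comp_continuous (continuous_circleMap z R')
            (fun θ => hball (by exact circleMap_mem_closedBall z hR.le θ))).norm
      _ = 2 * Real.pi * M := by simp [mul_comm]
  have h5 : ‖cauchyPowerSeries g z R' n‖ ≤ M * (R)⁻¹ ^ n := by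
    refine h4.trans ?_
    have hcoe : |(R' : ℝ)| = R := abs_of_nonneg hR.le
    rw [hcoe]
    apply mul_le_mul_of_nonneg_right _ (by positivity)
    calc (2 * Real.pi)⁻¹ * ∫ θ in (0:ℝ)..2 * Real.pi, ‖g (circleMap z R' θ)‖
        ≤ (2 * Real.pi)⁻¹ * (2 * Real.pi * M) := by
          apply mul_le_mul_of_nonneg_left hI (by positivity)
      _ = M := by field_simp
  calc ‖iteratedDeriv n g z‖ = n.factorial * ‖cauchyPowerSeries g z R' n fun _ => 1‖ := h2
    _ ≤ n.factorial * (M * R⁻¹ ^ n) := by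
        apply mul_le_mul_of_nonneg_left (h3.trans h5) (by positivity)
    _ = n.factorial * M / R ^ n := by
        rw [inv_pow]
        ring


/-- The `h`-uniform form of Theorem 2.5: if `g` is analytic on an open set containing
`B̄(0, r*)` and `0 < h₀ < r*`, then there is `κ > 0`, independent of `h`, with
`‖∫_0^1 P_j(c) g(ch) dc‖ ≤ κ √(2j+1) (h/r*)^j` for all `h ∈ (0, h₀]` and all `j`. -/
theorem fourier_coeff_uniform_bound
    {E : Type*} [NormedAddCommGroup E] [NormedSpace ℂ E] [CompleteSpace E]
    (rstar : ℝ) (hr : 0 < rstar) (g : ℂ → E)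
    (U : Set ℂ) (hU : IsOpen U) (hball : Metric.closedBall (0:ℂ) rstar ⊆ U)
    (hg : ∀ z ∈ U, AnalyticAt ℂ g z)
    (h₀ : ℝ) (hh₀ : 0 < h₀) (hh₀r : h₀ < rstar) :
    ∃ κ > 0, ∀ h ∈ Set.Ioc (0:ℝ) h₀, ∀ j : ℕ,
      ‖∫ c in (0:ℝ)..1, legendreP j c • g ((c : ℂ) * (h : ℂ))‖ ≤
        κ * Real.sqrt (2 * (j : ℝ) + 1) * (h / rstar) ^ j := by
  -- a uniform bound for `g` on the closed ball
  obtain ⟨M0, hM0⟩ := (isCompact_closedBall (0:ℂ) rstar).exists_bound_of_continuousOn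
    (fun z hz => ((hg z (hball hz)).continuousAt).continuousWithinAt)
  set M : ℝ := max M0 0 with hMdef
  have hMnn : 0 ≤ M := le_max_right _ _
  have hMball : ∀ z ∈ Metric.closedBall (0:ℂ) rstar, ‖g z‖ ≤ M :=
    fun z hz => (hM0 z hz).trans (le_max_left _ _)
  have hdball : DifferentiableOn ℂ g (Metric.closedBall 0 rstar) :=
    fun z hz => ((hg z (hball hz)).differentiableAt).differentiableWithinAt
  have hCau : ∀ (n : ℕ) (z : ℂ), ‖z‖ < rstar →
      ‖iteratedDeriv n g z‖ ≤ n.factorial * M / (rstar - ‖z‖) ^ n :=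
    fun n z hz => cauchy_est rstar M g hdball hMball z hz n
  -- analyticity of iterated derivatives
  have hgU : AnalyticOnNhd ℂ g U := hg
  have hGi : ∀ n : ℕ, AnalyticOnNhd ℂ (iteratedDeriv n g) U := by
    intro n
    induction n with
    | zero => simpa [iteratedDeriv_zero] using hgU
    | succ n ih => rw [iteratedDeriv_succ]; exact ih.deriv
  refine ⟨M + 1, by positivity, ?_⟩
  intro h hh j
  obtain ⟨hhpos, hhle⟩ := hh
  have hhr : h < rstar := lt_of_le_of_lt hhle hh₀r
  set φ : ℝ → ℂ := fun x => (x : ℂ) * (h : ℂ) with hφdef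
  have hφnorm : ∀ x ∈ Set.Icc (0:ℝ) 1, ‖φ x‖ = x * h := by
    intro x hx
    simp [hφdef, norm_mul, Complex.norm_real, Real.norm_eq_abs,
      abs_of_nonneg hx.1, abs_of_nonneg hhpos.le]
  have hφlt : ∀ x ∈ Set.Icc (0:ℝ) 1, ‖φ x‖ < rstar := by
    intro x hx
    rw [hφnorm x hx]
    nlinarith [hx.1, hx.2, hhpos.le]
  have hφU : ∀ x ∈ Set.Icc (0:ℝ) 1, φ x ∈ U := by
    intro x hx
    exact hball (by simpa [Metric.mem_closedBall, dist_eq_norm] using (hφlt x hx).le)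
  set F : ℕ → ℝ → E := fun i x => ((h:ℂ))^i • iteratedDeriv i g (φ x) with hFdef
  have hFderiv : ∀ i : ℕ, ∀ x ∈ Set.Icc (0:ℝ) 1, HasDerivAt (F i) (F (i+1) x) x := by
    intro i x hx
    have hGz : HasDerivAt (iteratedDeriv i g) (iteratedDeriv (i+1) g (φ x)) (φ x) := by
      have hd := ((hGi i (φ x) (hφU x hx)).differentiableAt).hasDerivAt
      rw [iteratedDeriv_succ]
      exact hd
    have hφ' : HasDerivAt φ ((h:ℂ)) x := by
      simpa using (Complex.ofRealCLM.hasDerivAt (x := x)).mul_const ((h:ℂ))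
    have hcomp := HasDerivAt.scomp (𝕜' := ℂ) (F := E) (h := φ) x hGz hφ'
    have := hcomp.const_smul ((h:ℂ)^i)
    have heq : F (i+1) x = ((h:ℂ))^i • ((h:ℂ)) • iteratedDeriv (i+1) g (φ x) := by
      show ((h:ℂ))^(i+1) • iteratedDeriv (i+1) g (φ x) = _
      rw [smul_smul, ← pow_succ]
    rw [heq]
    exact this
  have hFcont : ∀ i : ℕ, ContinuousOn (F i) (Set.Icc (0:ℝ) 1) :=
    fun i x hx => ((hFderiv i x hx).continuousAt).continuousWithinAt
  set W : Polynomial ℝ := ((X:Polynomial ℝ)^2 - X)^j with hWdef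
  have hW01 : ∀ i < j, (derivative^[i] W).eval 0 = 0 ∧ (derivative^[i] W).eval 1 = 0 := by
    intro i hij
    obtain ⟨q, hq⟩ := Polynomial.pow_sub_dvd_iterate_derivative_pow ((X:Polynomial ℝ)^2 - X) j i
    rw [hWdef, hq]
    have hji : j - i ≠ 0 := Nat.sub_ne_zero_of_lt hij
    constructor <;> simp [Polynomial.eval_mul, Polynomial.eval_pow, zero_pow hji]
  have huIcc : Set.uIcc (0:ℝ) 1 = Set.Icc (0:ℝ) 1 := Set.uIcc_of_le zero_le_one
  -- continuity and integrability helpers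
  have hintg : ∀ (p : Polynomial ℝ) (i : ℕ),
      IntervalIntegrable (fun x => p.eval x • F i x) MeasureTheory.volume 0 1 := by
    intro p i
    apply ContinuousOn.intervalIntegrable
    rw [huIcc]
    exact (p.continuous.continuousOn).smul (hFcont i)
  -- one step of integration by parts
  have step : ∀ i : ℕ, i + 1 ≤ j →
      (∫ x in (0:ℝ)..1, (derivative^[j-i] W).eval x • F i x)
        = - ∫ x in (0:ℝ)..1, (derivative^[j-(i+1)] W).eval x • F (i+1) x := by
    intro i hij
    set u : Polynomial ℝ := derivative^[j-(i+1)] W with hudef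
    have hDu : derivative^[j-i] W = derivative u := by
      rw [hudef]
      have : j - i = (j - (i+1)) + 1 := by omega
      rw [this, Function.iterate_succ_apply']
    have huv : ∀ x ∈ Set.uIcc (0:ℝ) 1, HasDerivAt (fun y => u.eval y • F i y)
        (u.eval x • F (i+1) x + (derivative u).eval x • F i x) x := by
      intro x hx
      rw [huIcc] at hx
      exact (u.hasDerivAt x).smul (hFderiv i x hx)
    have hint1 : IntervalIntegrable
        (fun x => u.eval x • F (i+1) x + (derivative u).eval x • F i x)
        MeasureTheory.volume 0 1 := (hintg u (i+1)).add (hintg (derivative u) i)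
    have hFTC := intervalIntegral.integral_eq_sub_of_hasDerivAt huv hint1
    have hbd : u.eval 1 • F i 1 - u.eval 0 • F i 0 = 0 := by
      have h0 := (hW01 (j-(i+1)) (by omega)).1
      have h1 := (hW01 (j-(i+1)) (by omega)).2
      rw [hudef] at *
      rw [h0, h1, zero_smul, zero_smul, sub_zero]
    rw [hbd] at hFTC
    have hadd := intervalIntegral.integral_add (hintg u (i+1)) (hintg (derivative u) i)
    rw [hadd] at hFTC
    rw [hDu]
    exact eq_neg_of_add_eq_zero_right hFTC
  have key : ∀ i, i ≤ j →
      (∫ x in (0:ℝ)..1, (derivative^[j] W).eval x • F 0 x)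
        = ((-1:ℝ)^i) • ∫ x in (0:ℝ)..1, (derivative^[j-i] W).eval x • F i x := by
    intro i
    induction i with
    | zero => intro _; simp
    | succ i ih =>
      intro hij
      rw [ih (by omega), step i hij, smul_neg, pow_succ, mul_neg_one, neg_smul]
  have hkeyj := key j le_rfl
  rw [Nat.sub_self, Function.iterate_zero, id_eq] at hkeyj
  -- rewrite the Legendre polynomial via the polynomial `W`
  have hiter : iteratedDeriv j (fun y : ℝ => (y ^ 2 - y) ^ j)
      = fun y => (derivative^[j] W).eval y := by
    have hfun : (fun y : ℝ => (y ^ 2 - y) ^ j) = fun y => W.eval y := by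
      funext y; simp [hWdef]
    rw [hfun, iteratedDeriv_polynomial_eval]
  set a : ℝ := Real.sqrt (2 * (j:ℝ) + 1) / (j.factorial : ℝ) with hadef
  have hann : 0 ≤ a := by
    apply div_nonneg (Real.sqrt_nonneg _)
    positivity
  have hLeg : (fun c : ℝ => legendreP j c • g ((c:ℂ) * (h:ℂ)))
      = fun c => a • ((derivative^[j] W).eval c • F 0 c) := by
    funext c
    rw [legendreP, hiter, ← hadef, mul_smul]
    congr 1
    simp [hFdef, hφdef]
  -- the pointwise bound for the integrand after integration by parts
  have hpt : ∀ x ∈ Set.uIoc (0:ℝ) 1,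
      ‖W.eval x • F j x‖ ≤ (j.factorial : ℝ) * M * (h/rstar)^j := by
    intro x hx
    have hx' : x ∈ Set.Icc (0:ℝ) 1 := by
      rw [Set.uIoc_of_le zero_le_one] at hx; exact ⟨hx.1.le, hx.2⟩
    have hx0 : 0 ≤ x := hx'.1
    have hx1 : x ≤ 1 := hx'.2
    have hzlt : ‖φ x‖ < rstar := hφlt x hx'
    have hden : 0 < rstar - x * h := by nlinarith
    have hC := hCau j (φ x) hzlt
    rw [hφnorm x hx'] at hC
    have hWx : |W.eval x| = (x - x^2)^j := by
      rw [hWdef, Polynomial.eval_pow, abs_pow]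
      congr 1
      have : Polynomial.eval x ((X:Polynomial ℝ)^2 - X) = x^2 - x := by simp
      rw [this, abs_of_nonpos (by nlinarith)]
      ring
    have hnormF : ‖F j x‖ = h^j * ‖iteratedDeriv j g (φ x)‖ := by
      show ‖((h:ℂ))^j • iteratedDeriv j g (φ x)‖ = _
      rw [norm_smul, norm_pow, Complex.norm_real, Real.norm_eq_abs, abs_of_nonneg hhpos.le]
    have hfrac : (x - x^2) * h / (rstar - x * h) ≤ h / rstar := by
      rw [div_le_div_iff₀ hden hr]
      have hxh : x * h ≤ x * rstar := mul_le_mul_of_nonneg_left hhr.le hx0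
      nlinarith [mul_nonneg hhpos.le (sub_nonneg.mpr hxh),
        mul_nonneg (mul_nonneg hhpos.le hr.le) (sq_nonneg (1 - x))]
    have hxx : 0 ≤ x - x^2 := by nlinarith [mul_nonneg hx0 (sub_nonneg.mpr hx1)]
    have hfracnn : 0 ≤ (x - x^2) * h / (rstar - x * h) :=
      div_nonneg (mul_nonneg hxx hhpos.le) hden.le
    have hDnn : (0:ℝ) ≤ ‖iteratedDeriv j g (φ x)‖ := norm_nonneg _
    calc ‖W.eval x • F j x‖ = |W.eval x| * ‖F j x‖ := by
          rw [norm_smul, Real.norm_eq_abs]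
      _ = (x - x^2)^j * (h^j * ‖iteratedDeriv j g (φ x)‖) := by rw [hWx, hnormF]
      _ ≤ (x - x^2)^j * (h^j * ((j.factorial : ℝ) * M / (rstar - x*h)^j)) := by
          apply mul_le_mul_of_nonneg_left _ (pow_nonneg hxx j)
          exact mul_le_mul_of_nonneg_left hC (by positivity)
      _ = (j.factorial : ℝ) * M * ((x - x^2) * h / (rstar - x*h))^j := by
          rw [div_pow, mul_pow]
          ring
      _ ≤ (j.factorial : ℝ) * M * (h/rstar)^j := by
          apply mul_le_mul_of_nonneg_left _ (by positivity)
          exact pow_le_pow_left₀ hfracnn hfrac j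
  have hIbound : ‖∫ x in (0:ℝ)..1, W.eval x • F j x‖
      ≤ (j.factorial : ℝ) * M * (h/rstar)^j := by
    have := intervalIntegral.norm_integral_le_of_norm_le_const hpt
    simpa using this
  -- put everything together
  rw [hLeg, intervalIntegral.integral_smul, hkeyj, norm_smul, norm_smul,
    Real.norm_eq_abs, Real.norm_eq_abs, abs_of_nonneg hann]
  have habs1 : |((-1:ℝ))^j| = 1 := by
    rw [abs_pow, abs_neg, abs_one, one_pow]
  rw [habs1, one_mul]
  have hfacpos : (0:ℝ) < (j.factorial : ℝ) := by exact_mod_cast j.factorial_pos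
  calc a * ‖∫ x in (0:ℝ)..1, W.eval x • F j x‖
      ≤ a * ((j.factorial : ℝ) * M * (h/rstar)^j) := by
        exact mul_le_mul_of_nonneg_left hIbound hann
    _ = M * Real.sqrt (2 * (j:ℝ) + 1) * (h/rstar)^j := by
        rw [hadef]
        field_simp
    _ ≤ (M+1) * Real.sqrt (2 * (j:ℝ) + 1) * (h/rstar)^j := by
        apply mul_le_mul_of_nonneg_right _ (by positivity)
        apply mul_le_mul_of_nonneg_right _ (Real.sqrt_nonneg _)
        linarith
end

section
/- Let E be a real Banach space, f : E → E continuous, y₀ ∈ E, T > 0. Let F : ℝ → ℝ → E → E (the general solution map (t, ξ, η) ↦ F t ξ η of the ODE ẏ = f(y) with y(ξ) = η), let Φ : ℝ × ℝ → L(E, E) be continuous, and let σ : ℝ → E be continuously differentiable with σ(0) = y₀. Set y(t) := F t 0 y₀. Assume for every t̄ ∈ [0, T]: (i) F t̄ t̄ η = η for all η ∈ E; (ii) for every t ∈ [0, t̄], the joint map (ξ, η) ↦ F t̄ ξ η has at the point (t, σ(t)) the Fréchet derivative (δξ, δη) ↦ −Φ(t̄, t)(f(σ(t))) δξ + Φ(t̄,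 t)(δη); (iii) the map t ↦ Φ(t̄, t)(σ′(t) − f(σ(t))) is continuous on [0, t̄]. Then for every t̄ ∈ [0, T], σ(t̄) − y(t̄) = ∫_0^{t̄} Φ(t̄, t)(σ′(t) − f(σ(t))) dt. -/
/-- Error representation (first step in the proof of Theorem 2.6): if `F t ξ η` is the
general solution map of `ẏ = f(y)`, `Φ` the variational propagator, `σ` a `C¹` curve with
`σ(0) = y₀` and `y(t) = F t 0 y₀`, then
`σ(tb) - y(tb) = ∫_0^{tb} Φ(tb, t)(σ'(t) - f(σ(t))) dt` for every `tb ∈ [0, T]`. -/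
theorem error_representation
    {E : Type*} [NormedAddCommGroup E] [NormedSpace ℝ E] [CompleteSpace E]
    (f : E → E) (hf : Continuous f) (y₀ : E) (T : ℝ) (hT : 0 < T)
    (F : ℝ → ℝ → E → E) (Φ : ℝ × ℝ → E →L[ℝ] E) (hΦ : Continuous Φ)
    (σ : ℝ → E) (hσ : ContDiff ℝ 1 σ) (hσ0 : σ 0 = y₀)
    (y : ℝ → E) (hy : ∀ t, y t = F t 0 y₀)
    (hFid : ∀ tb ∈ Set.Icc (0:ℝ) T, ∀ η : E, F tb tb η = η)
    (hFderiv : ∀ tb ∈ Set.Icc (0:ℝ) T, ∀ t ∈ Set.Icc (0:ℝ) tb,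
      HasFDerivAt (fun p : ℝ × E => F tb p.1 p.2)
        ((Φ (tb, t)).comp (ContinuousLinearMap.snd ℝ ℝ E) -
          (ContinuousLinearMap.fst ℝ ℝ E).smulRight (Φ (tb, t) (f (σ t))))
        (t, σ t))
    (hcont : ∀ tb ∈ Set.Icc (0:ℝ) T,
      ContinuousOn (fun t : ℝ => Φ (tb, t) (deriv σ t - f (σ t))) (Set.Icc (0:ℝ) tb)) :
    ∀ tb ∈ Set.Icc (0:ℝ) T,
      σ tb - y tb = ∫ t in (0:ℝ)..tb, Φ (tb, t) (deriv σ t - f (σ t)) := by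
  intro tb htb
  obtain ⟨h0, hTb⟩ := htb
  set g : ℝ → E := fun t => F tb t (σ t) with hg
  have huIcc : Set.uIcc (0:ℝ) tb = Set.Icc 0 tb := Set.uIcc_of_le h0
  have hderiv : ∀ t ∈ Set.uIcc (0:ℝ) tb,
      HasDerivAt g (Φ (tb, t) (deriv σ t - f (σ t))) t := by
    intro t ht
    rw [huIcc] at ht
    have hσd : HasDerivAt σ (deriv σ t) t :=
      ((hσ.differentiable one_ne_zero) t).hasDerivAt
    have hpair : HasDerivAt (fun s : ℝ => (s, σ s)) ((1:ℝ), deriv σ t) t :=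
      (hasDerivAt_id t).prodMk hσd
    have := (hFderiv tb ⟨h0, hTb⟩ t ht).comp_hasDerivAt t hpair
    convert this using 1
    · rfl
    simp [ContinuousLinearMap.sub_apply, map_sub]
  have hint : IntervalIntegrable (fun t : ℝ => Φ (tb, t) (deriv σ t - f (σ t)))
      MeasureTheory.volume 0 tb := by
    apply ContinuousOn.intervalIntegrable
    rw [huIcc]
    exact hcont tb ⟨h0, hTb⟩
  have key := intervalIntegral.integral_eq_sub_of_hasDerivAt hderiv hint
  have hgtb : g tb = σ tb := hFid tb ⟨h0, hTb⟩ (σ tb)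
  have hg0 : g 0 = y tb := by simp [hg, hσ0, hy]
  rw [key, hgtb, hg0]
end

section
/- Let E be a real Banach space, f : E → E, y₀ ∈ E, h > 0, integers 1 ≤ s ≤ k, nodes c_1, …, c_k ∈ [0,1] and weights b_1, …, b_k ∈ ℝ. Define the Runge–Kutta coefficients a_{ij} = b_j Σ_{ℓ=0}^{s−1} (∫_0^{c_i} P_ℓ(x) dx) P_ℓ(c_j) for 1 ≤ i, j ≤ k. Then: (1) if Y_1, …, Y_k ∈ E satisfy the stage equations Y_i = y₀ + h Σ_{j=1}^k a_{ij} f(Y_j) for all i, then the vectors γ̂_ℓ := Σ_{j=1}^k b_j P_ℓ(c_j) f(Y_j) (ℓ = 0, …, s−1) satisfy both Y_i = y₀ + h Σ_{ℓ=0}^{s−1} (∫_0^{c_i} P_ℓ(x) dx) γ̂_ℓ for all i, and the discrete problem γ̂_ℓ = Σ_{j=1}^k b_j P_ℓ(c_j) f(y₀ + h Σ_{ℓ'=0}^{s−1} (∫_0^{c_j} P_{ℓ'}(x) dx) γ̂_{ℓ'}) for all ℓ; (2) conversely, if γ̂_0, …, γ̂_{s−1} ∈ E satisfy this discrete problem,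 then Y_i := y₀ + h Σ_{ℓ=0}^{s−1} (∫_0^{c_i} P_ℓ(x) dx) γ̂_ℓ satisfy the stage equations. -/
lemma hbvm_swap_sum {E : Type*} [NormedAddCommGroup E] [NormedSpace ℝ E]
    (s k : ℕ) (c b : Fin k → ℝ) (a : Fin k → Fin k → ℝ)
    (ha : ∀ i j, a i j =
      b j * ∑ ℓ ∈ Finset.range s, (∫ x in (0:ℝ)..(c i), legendreP ℓ x) * legendreP ℓ (c j))
    (g : Fin k → E) (i : Fin k) :
    ∑ j, a i j • g j =
      ∑ ℓ ∈ Finset.range s,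
        (∫ x in (0:ℝ)..(c i), legendreP ℓ x) • ∑ j, (b j * legendreP ℓ (c j)) • g j := by
  have : ∀ j : Fin k, a i j • g j = ∑ ℓ ∈ Finset.range s,
      (∫ x in (0:ℝ)..(c i), legendreP ℓ x) • (b j * legendreP ℓ (c j)) • g j := by
    intro j
    rw [ha, mul_comm, Finset.sum_mul, Finset.sum_smul]
    refine Finset.sum_congr rfl fun ℓ _ => ?_
    rw [smul_smul]
    congr 1
    ring
  simp only [this]
  rw [Finset.sum_comm]
  exact Finset.sum_congr rfl fun ℓ _ => (Finset.smul_sum).symm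

/-- Equivalence between the `k`-stage Runge-Kutta formulation of the HBVM(k,s) method and
the reduced discrete problem of block dimension `s`: with
`a_{ij} = b_j Σ_{ℓ<s} (∫_0^{c_i} P_ℓ) P_ℓ(c_j)`,
(1) if the stages `Y_i` solve the stage equations, then the vectors
`γ̂_ℓ = Σ_j b_j P_ℓ(c_j) f(Y_j)` reconstruct the stages and solve the discrete problem;
(2) conversely, a solution `γ̂` of the discrete problem yields stages solving the stage
equations. -/
theorem hbvm_stage_equations_equiv_discrete_problem
    {E : Type*} [NormedAddCommGroup E] [NormedSpace ℝ E]
    (f : E → E) (y₀ : E) (h : ℝ) (hh : 0 < h) (s k : ℕ) (hs : 1 ≤ s) (hsk : s ≤ k)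
    (c b : Fin k → ℝ) (hc : ∀ i, c i ∈ Set.Icc (0:ℝ) 1)
    (a : Fin k → Fin k → ℝ)
    (ha : ∀ i j, a i j =
      b j * ∑ ℓ ∈ Finset.range s, (∫ x in (0:ℝ)..(c i), legendreP ℓ x) * legendreP ℓ (c j)) :
    (∀ Y : Fin k → E,
      (∀ i, Y i = y₀ + h • ∑ j, a i j • f (Y j)) →
      ((∀ i, Y i = y₀ + h • ∑ ℓ ∈ Finset.range s,
          (∫ x in (0:ℝ)..(c i), legendreP ℓ x) • ∑ j, (b j * legendreP ℓ (c j)) • f (Y j)) ∧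
       (∀ ℓ ∈ Finset.range s,
          (∑ j, (b j * legendreP ℓ (c j)) • f (Y j)) =
            ∑ j, (b j * legendreP ℓ (c j)) •
              f (y₀ + h • ∑ ℓ' ∈ Finset.range s,
                (∫ x in (0:ℝ)..(c j), legendreP ℓ' x) •
                  ∑ j', (b j' * legendreP ℓ' (c j')) • f (Y j'))))) ∧
    (∀ γ : ℕ → E,
      (∀ ℓ ∈ Finset.range s,
        γ ℓ = ∑ j, (b j * legendreP ℓ (c j)) •
          f (y₀ + h • ∑ ℓ' ∈ Finset.range s,
            (∫ x in (0:ℝ)..(c j), legendreP ℓ' x) • γ ℓ')) →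
      ∀ i, (y₀ + h • ∑ ℓ ∈ Finset.range s, (∫ x in (0:ℝ)..(c i), legendreP ℓ x) • γ ℓ) =
        y₀ + h • ∑ j, a i j •
          f (y₀ + h • ∑ ℓ' ∈ Finset.range s,
            (∫ x in (0:ℝ)..(c j), legendreP ℓ' x) • γ ℓ')) := by
  constructor
  · intro Y hY
    have hrec : ∀ i, Y i = y₀ + h • ∑ ℓ ∈ Finset.range s,
        (∫ x in (0:ℝ)..(c i), legendreP ℓ x) • ∑ j, (b j * legendreP ℓ (c j)) • f (Y j) := by
      intro i
      rw [hY i, hbvm_swap_sum s k c b a ha (fun j => f (Y j)) i]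
    refine ⟨hrec, fun ℓ _ => ?_⟩
    refine Finset.sum_congr rfl fun j _ => ?_
    rw [← hrec j]
  · intro γ hγ i
    congr 1
    rw [hbvm_swap_sum s k c b a ha
      (fun j => f (y₀ + h • ∑ ℓ' ∈ Finset.range s,
        (∫ x in (0:ℝ)..(c j), legendreP ℓ' x) • γ ℓ')) i]
    congr 1
    exact Finset.sum_congr rfl fun ℓ hℓ => by rw [← hγ ℓ hℓ]
end
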